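/- Let k be a field, S a finite set, W a k-vector space, φ: k^S → W a linear map, V_A = span_k{φ(e_a) : a ∈ A}, and X ⊆ S. Let π: W → W/V_X be the canonical projection. Then the matroid on S \ X represented by the linear map k^{S\X} → W/V_X sending e_a to π(φ(e_a)) equals the contraction M(φ)/X of the matroid M(φ) by X (with ground set restricted to S \ X). -/

import Mathlib

section Aux

variable {k S W : Type} [Field k] [AddCommGroup W] [Module k W]

lemma aux_quotient {ι : Type} (v : ι → W) (p : Submodule k W) :
    LinearIndependent k (fun i => Submodule.Quotient.mk (p := p) (v i)) ↔
      LinearIndependent k v ∧ Disjoint (Submodule.span k (Set.range v)) p := by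
  constructor
  · intro h
    refine ⟨h.of_comp p.mkQ, Submodule.disjoint_def.2 fun w hw hwp => ?_⟩
    obtain ⟨c, rfl⟩ := Finsupp.mem_span_range_iff_exists_finsupp.1 hw
    have hc : Finsupp.linearCombination k
        (fun i => Submodule.Quotient.mk (p := p) (v i)) c = 0 := by
      have h1 : p.mkQ (c.sum fun i a => a • v i) = 0 :=
        (Submodule.Quotient.mk_eq_zero p).2 hwp
      rw [Finsupp.linearCombination_apply, Finsupp.sum] at *
      rw [map_sum] at h1
      simpa using h1
    have := linearIndependent_iff.1 h c hc
    simp [this]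
  · rintro ⟨hv, hd⟩
    have := hv.map (f := p.mkQ) (by rw [Submodule.ker_mkQ]; exact hd)
    exact this

lemma aux_union {s t : Set S} (f : S → W) (hst : Disjoint s t) :
    LinearIndependent k (fun x : ↥(s ∪ t) => f x.1) ↔
      (LinearIndependent k fun x : s => f x.1) ∧
        (LinearIndependent k fun x : t => f x.1) ∧
          Disjoint (Submodule.span k (f '' s)) (Submodule.span k (f '' t)) := by
  classical
  have he : (fun x : ↥(s ∪ t) => f x.1) ∘ (Equiv.Set.union hst).symm
      = Sum.elim (fun x : s => f x.1) (fun x : t => f x.1) := by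
    funext x
    cases x with
    | inl a => rfl
    | inr a => rfl
  rw [← linearIndependent_equiv (Equiv.Set.union hst).symm, he, linearIndependent_sum]
  simp [Sum.elim_comp_inl, Sum.elim_comp_inr, ← Set.image_eq_range]

end Aux

theorem quotient_representation_eq_contraction
    {k S W : Type} [Field k] [Fintype S] [DecidableEq S]
    [AddCommGroup W] [Module k W]
    (φ : (S → k) →ₗ[k] W) (X : Finset S) :
    letI V : Finset S → Submodule k W :=
      fun A => Submodule.span k ((fun a => φ (Pi.single a 1)) '' (↑A : Set S))
    ∀ I : Finset S, Disjoint I X →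
      (LinearIndependent k
          (fun a : ↥I => Submodule.Quotient.mk (p := V X) (φ (Pi.single a.1 1))) ↔
        ∃ B : Finset S, B ⊆ X ∧
          LinearIndependent k (fun a : ↥B => φ (Pi.single a.1 1)) ∧
          (∀ B' : Finset S, B ⊆ B' → B' ⊆ X →
            LinearIndependent k (fun a : ↥B' => φ (Pi.single a.1 1)) → B' = B) ∧
          LinearIndependent k (fun a : ↥(I ∪ B) => φ (Pi.single a.1 1))) := by
  intro I hIX
  set f : S → W := fun a => φ (Pi.single a 1) with hf
  set p : Submodule k W := Submodule.span k (f '' (↑X : Set S)) with hp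
  -- range of the restricted family equals the image
  have hrange : ∀ A : Finset S, Set.range (fun a : ↥A => f a.1) = f '' (↑A : Set S) := by
    intro A; rw [Set.image_eq_range]; rfl
  -- span of a maximal independent subset equals the span over X
  have hspan : ∀ B : Finset S, B ⊆ X →
      LinearIndependent k (fun a : ↥B => f a.1) →
      (∀ B' : Finset S, B ⊆ B' → B' ⊆ X →
        LinearIndependent k (fun a : ↥B' => f a.1) → B' = B) →
      Submodule.span k (f '' (↑B : Set S)) = p := by
    intro B hBX hBli hBmax
    refine le_antisymm (Submodule.span_mono (Set.image_mono (by exact_mod_cast hBX))) ?_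
    rw [Submodule.span_le]
    rintro - ⟨x, hx, rfl⟩
    by_cases hxB : x ∈ B
    · exact Submodule.subset_span ⟨x, hxB, rfl⟩
    · by_contra hxs
      have hli : LinearIndependent k (fun a : ↥(insert x (↑B : Set S)) => f a.1) :=
        (linearIndepOn_insert (f := f) (by exact_mod_cast hxB)).2 ⟨hBli, hxs⟩
      have hset : ((↑(insert x B) : Set S)) = insert x (↑B : Set S) := Finset.coe_insert x B
      have hli' : LinearIndependent k (fun a : ↥(insert x B : Finset S) => f a.1) := by
        rw [show ((fun a : ↥(insert x B : Finset S) => f a.1)) =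
          (fun a : ↥(insert x (↑B : Set S)) => f a.1) ∘
            fun a : ↥(insert x B : Finset S) => (⟨a.1, by rw [← hset]; exact_mod_cast a.2⟩ :
              ↥(insert x (↑B : Set S))) from rfl]
        exact hli.comp _ (fun a b hab => Subtype.ext (congrArg Subtype.val hab :))
      have := hBmax (insert x B) (Finset.subset_insert x B)
        (Finset.insert_subset hx hBX) hli'
      exact hxB (by rw [← this]; exact Finset.mem_insert_self x B)
  constructor
  · intro h
    rw [aux_quotient] at h
    obtain ⟨hI, hdisj⟩ := h
    rw [hrange] at hdisj
    -- choose a maximal independent subset of X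
    have hfin : {B : Finset S | B ⊆ X ∧ LinearIndependent k (fun a : ↥B => f a.1)}.Finite :=
      Set.Finite.subset (X.powerset : Finset (Finset S)).finite_toSet
        (fun B hB => by simpa [Finset.mem_powerset] using hB.1)
    have hne : {B : Finset S | B ⊆ X ∧ LinearIndependent k (fun a : ↥B => f a.1)}.Nonempty := by
      refine ⟨∅, Finset.empty_subset X, ?_⟩
      haveI : IsEmpty (↥(∅ : Finset S)) := ⟨fun a => Finset.notMem_empty _ a.2⟩
      exact linearIndependent_empty_type
    obtain ⟨B, ⟨hBX, hBli⟩, hBmax⟩ :=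
      Set.Finite.exists_maximalFor Finset.card _ hfin hne
    have hmax : ∀ B' : Finset S, B ⊆ B' → B' ⊆ X →
        LinearIndependent k (fun a : ↥B' => f a.1) → B' = B := by
      intro B' hBB' hB'X hB'li
      have := hBmax (show B' ∈ _ from ⟨hB'X, hB'li⟩) (Finset.card_le_card hBB')
      exact (Finset.eq_of_subset_of_card_le hBB' this).symm
    refine ⟨B, hBX, hBli, hmax, ?_⟩
    -- independence over I ∪ B
    have hIB : Disjoint (↑I : Set S) (↑B : Set S) :=
      Finset.disjoint_coe.2 (hIX.mono_right hBX)
    have hsp : Submodule.span k (f '' (↑B : Set S)) = p := hspan B hBX hBli hmax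
    have hun : LinearIndependent k (fun x : ↥((↑I : Set S) ∪ (↑B : Set S)) => f x.1) :=
      (aux_union f hIB).2 ⟨hI, hBli, by rw [hsp]; exact hdisj⟩
    have hset : ((↑(I ∪ B) : Set S)) = (↑I : Set S) ∪ (↑B : Set S) := Finset.coe_union I B
    rw [show ((fun a : ↥(I ∪ B : Finset S) => f a.1)) =
      (fun a : ↥((↑I : Set S) ∪ (↑B : Set S)) => f a.1) ∘
        fun a : ↥(I ∪ B : Finset S) => (⟨a.1, by rw [← hset]; exact_mod_cast a.2⟩ :
          ↥((↑I : Set S) ∪ (↑B : Set S))) from rfl]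
    exact hun.comp _ (fun a b hab => Subtype.ext (congrArg Subtype.val hab :))
  · rintro ⟨B, hBX, hBli, hBmax, hIB⟩
    have hsp : Submodule.span k (f '' (↑B : Set S)) = p := hspan B hBX hBli hBmax
    have hIBd : Disjoint (↑I : Set S) (↑B : Set S) :=
      Finset.disjoint_coe.2 (hIX.mono_right hBX)
    have hset : ((↑(I ∪ B) : Set S)) = (↑I : Set S) ∪ (↑B : Set S) := Finset.coe_union I B
    have hun : LinearIndependent k (fun x : ↥((↑I : Set S) ∪ (↑B : Set S)) => f x.1) := by
      rw [show ((fun a : ↥((↑I : Set S) ∪ (↑B : Set S)) => f a.1)) =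
        (fun a : ↥(I ∪ B : Finset S) => f a.1) ∘
          fun a : ↥((↑I : Set S) ∪ (↑B : Set S)) =>
            (⟨a.1, by have h2 := a.2; simp only [Set.mem_union, Finset.mem_coe] at h2; exact Finset.mem_union.mpr h2⟩ :
              ↥(I ∪ B : Finset S)) from rfl]
      exact hIB.comp _ (fun a b hab => Subtype.ext (congrArg Subtype.val hab :))
    obtain ⟨hI, -, hdisj⟩ := (aux_union f hIBd).1 hun
    rw [aux_quotient]
    exact ⟨hI, by rw [hrange]; show Disjoint _ p; rw [← hsp]; exact hdisj⟩
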